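/- Let β_1,…,β_n be a T-action datum in V, let D = diag(λ_1,…,λ_n), and let Q be the n×n upper triangular complex matrix with Q_{jj} = 1, Q_{jk} = a_{γ_j,γ_k} for j < k and Q_{jk} = 0 for j > k. For a ∈ ℂ^n and ξ ∈ V, write ξ⃗ = (⟨ξ,β_1⟩,…,⟨ξ,β_n⟩)^t ∈ ℂ^n. Then there exists w ∈ ℂ^n with λw = a and β(w) = ξ if and only if ξ = Σ_{j=1}^n λ_j^{−1}(⟨ξ,β_j⟩ − a_j) γ_j; and in that case the solution w is unique and is given by w = QD^{−1}(ξ⃗ − a). -/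

import Mathlib

open Finset Matrix

noncomputable section

/-- The standard embedding of an integer vector into `ℂⁿ`. -/
def cvec {n : ℕ} (w : Fin n → ℤ) : Fin n → ℂ := fun j => (w j : ℂ)

/-- `J_w = { j : w_j = -1 }`. -/
def Jset {n : ℕ} (w : Fin n → ℤ) : Finset (Fin n) :=
  Finset.univ.filter (fun j => w j = -1)

/-- The linear map `β : ℂⁿ → V`, `w ↦ ∑ w_j β_j`. -/
def bmap {n : ℕ} {V : Type*} [AddCommGroup V] [Module ℂ V]
    (β : Fin n → V) (w : Fin n → ℂ) : V :=
  ∑ j, w j • β j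

/-- The pair `(λ, β)` is T-log-symplectic. -/
def TLogSymp {n : ℕ} {V : Type*} [AddCommGroup V] [Module ℂ V]
    (M : Matrix (Fin n) (Fin n) ℂ) (β : Fin n → V) : Prop :=
  ∀ w : Fin n → ℂ, M.mulVec w = 0 → bmap β w = 0 → w = 0

/-- The set `W(λ, β)`. -/
def Wset {n : ℕ} {V : Type*} [AddCommGroup V] [Module ℂ V]
    (M : Matrix (Fin n) (Fin n) ℂ) (β : Fin n → V) : Set (Fin n → ℤ) :=
  {w | (∀ j, -1 ≤ w j) ∧ (∀ j, j ∉ Jset w → M.mulVec (cvec w) j = 0) ∧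
    bmap β (cvec w) = 0}

/-- The set `S(λ, β)` of smoothable weights. -/
def Sset {n : ℕ} {V : Type*} [AddCommGroup V] [Module ℂ V]
    (M : Matrix (Fin n) (Fin n) ℂ) (β : Fin n → V) : Set (Fin n → ℤ) :=
  {θ | θ ∈ Wset M β ∧ (Jset θ).card = 2}

/-- `S_m`: sums of exactly `m` elements of `S`, repetitions allowed. -/
def SumOf {n : ℕ} (S : Set (Fin n → ℤ)) (m : ℕ) : Set (Fin n → ℤ) :=
  {w | ∃ l : Multiset (Fin n → ℤ), (∀ x ∈ l, x ∈ S) ∧ Multiset.card l = m ∧ l.sum = w}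

/-- `S_{≥ m}`: sums of at least `m` elements of `S`, repetitions allowed. -/
def SumGE {n : ℕ} (S : Set (Fin n → ℤ)) (m : ℕ) : Set (Fin n → ℤ) :=
  {w | ∃ m', m ≤ m' ∧ w ∈ SumOf S m'}

/-- A vector `w ∈ ℤⁿ` is negatively bordered. -/
def NegBordered {n : ℕ} (w : Fin n → ℤ) : Prop :=
  ∃ j k : Fin n, j < k ∧ w j = -1 ∧ w k = -1 ∧ (∀ i, i < j → w i = 0) ∧
    (∀ i, k < i → w i = 0) ∧ (∀ i, j < i → i < k → 0 ≤ w i)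

/-- The Cartan number `a_{b,ξ} = 2⟨b,ξ⟩/⟨b,b⟩`. -/
def cartan {V : Type*} [AddCommGroup V] [Module ℂ V]
    (B : V →ₗ[ℂ] V →ₗ[ℂ] ℂ) (b ξ : V) : ℂ :=
  2 * B b ξ / B b b

/-- The reflection `s_b(ξ) = ξ - a_{b,ξ} b`. -/
def sRefl {V : Type*} [AddCommGroup V] [Module ℂ V]
    (B : V →ₗ[ℂ] V →ₗ[ℂ] ℂ) (b ξ : V) : V :=
  ξ - cartan B b ξ • b

/-- `reflL B g m = s_{g 0} ∘ s_{g 1} ∘ ⋯ ∘ s_{g (m-1)}`. -/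
def reflL {V : Type*} [AddCommGroup V] [Module ℂ V]
    (B : V →ₗ[ℂ] V →ₗ[ℂ] ℂ) (g : ℕ → V) : ℕ → V → V
  | 0, ξ => ξ
  | m + 1, ξ => reflL B g m (sRefl B (g m) ξ)

/-- `reflR B g m = s_{g (m-1)} ∘ ⋯ ∘ s_{g 1} ∘ s_{g 0}`. -/
def reflR {V : Type*} [AddCommGroup V] [Module ℂ V]
    (B : V →ₗ[ℂ] V →ₗ[ℂ] ℂ) (g : ℕ → V) : ℕ → V → V
  | 0, ξ => ξ
  | m + 1, ξ => sRefl B (g m) (reflR B g m ξ)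

/-- Extension of a `Fin n`-indexed family to `ℕ` by zero. -/
def gext {n : ℕ} {V : Type*} [AddCommGroup V] (v : Fin n → V) : ℕ → V :=
  fun t => if h : t < n then v ⟨t, h⟩ else 0

/-- `γ_j = s_{β_1} s_{β_2} ⋯ s_{β_{j-1}} (β_j)`. -/
def gam {n : ℕ} {V : Type*} [AddCommGroup V] [Module ℂ V]
    (B : V →ₗ[ℂ] V →ₗ[ℂ] ℂ) (β : Fin n → V) (j : Fin n) : V :=
  reflL B (gext β) j.val (β j)

/-- The Poisson coefficient matrix `λ` of a T-action datum: `λ_{jk} = -⟨β_j, β_k⟩` for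
`j < k`, `⟨β_j, β_k⟩` for `j > k`, and `0` on the diagonal. -/
def lam {n : ℕ} {V : Type*} [AddCommGroup V] [Module ℂ V]
    (B : V →ₗ[ℂ] V →ₗ[ℂ] ℂ) (β : Fin n → V) : Matrix (Fin n) (Fin n) ℂ :=
  Matrix.of fun j k =>
    if j < k then -(B (β j) (β k)) else if k < j then B (β j) (β k) else 0

/-- The upper triangular matrix `Q` with `Q_{jj} = 1` and `Q_{jk} = a_{γ_j, γ_k}` for
`j < k`. -/
def Qmat {n : ℕ} {V : Type*} [AddCommGroup V] [Module ℂ V]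
    (B : V →ₗ[ℂ] V →ₗ[ℂ] ℂ) (γ : Fin n → V) : Matrix (Fin n) (Fin n) ℂ :=
  Matrix.of fun j k => if j = k then 1 else if j < k then cartan B (γ j) (γ k) else 0

open scoped Classical in
/-- The set `{k ∈ [j+1, n] : γ_k = γ_j}`, whose minimum (when it exists) is `j⁺`. -/
def plusSet {n : ℕ} {V : Type*} (γ : Fin n → V) (j : Fin n) : Finset (Fin n) :=
  Finset.univ.filter (fun k => j < k ∧ γ k = γ j)

/-- `e_{j⁺} ∈ ℂⁿ`, with the convention `e_{+∞} = 0`. -/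
def eplus {n : ℕ} {V : Type*} (γ : Fin n → V) (j : Fin n) : Fin n → ℂ :=
  if h : (plusSet γ j).Nonempty then Pi.single ((plusSet γ j).min' h) 1 else 0

/-- `θ^{(j)} = Q (e_j - e_{j⁺}) ∈ ℂⁿ`. -/
def thetaC {n : ℕ} {V : Type*} [AddCommGroup V] [Module ℂ V]
    (B : V →ₗ[ℂ] V →ₗ[ℂ] ℂ) (β : Fin n → V) (j : Fin n) : Fin n → ℂ :=
  (Qmat B (gam B β)).mulVec ((Pi.single j 1 : Fin n → ℂ) - eplus (gam B β) j)

/-- The linear map `β : ℂⁿ → V`, `w ↦ ∑ w_j β_j`, as a bundled linear map. -/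
def betaLin {n : ℕ} {V : Type*} [AddCommGroup V] [Module ℂ V]
    (β : Fin n → V) : (Fin n → ℂ) →ₗ[ℂ] V where
  toFun w := ∑ j, w j • β j
  map_add' x y := by simp [add_smul, Finset.sum_add_distrib]
  map_smul' a x := by simp [Finset.smul_sum, smul_smul]

section Helpers
variable {V : Type*} [AddCommGroup V] [Module ℂ V] (B : V →ₗ[ℂ] V →ₗ[ℂ] ℂ)

lemma cartan_zero (b ξ : V) (h : B b b = 0) : cartan B b ξ = 0 := by
  simp [cartan, h]

lemma sRefl_of_zero (b ξ : V) (h : B b b = 0) : sRefl B b ξ = ξ := by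
  simp [sRefl, cartan_zero B b ξ h]

lemma B_self_sRefl (b y : V) (hbb : B b b ≠ 0) : B b (sRefl B b y) = -(B b y) := by
  simp only [sRefl, cartan, map_sub, _root_.map_smul, smul_eq_mul]
  field_simp
  ring

lemma cartan_self_sRefl (b y : V) : cartan B b (sRefl B b y) = -(cartan B b y) := by
  by_cases hbb : B b b = 0
  · simp [cartan_zero B _ _ hbb]
  · unfold cartan
    rw [B_self_sRefl B b y hbb]
    ring

lemma B_sRefl_sRefl (hB : ∀ x y, B x y = B y x) (b x y : V) :
    B (sRefl B b x) (sRefl B b y) = B x y := by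
  by_cases hbb : B b b = 0
  · rw [sRefl_of_zero B _ _ hbb, sRefl_of_zero B _ _ hbb]
  · simp only [sRefl, cartan, map_sub, _root_.map_smul, smul_eq_mul, LinearMap.sub_apply,
      LinearMap.smul_apply]
    rw [hB x b]
    field_simp
    ring

lemma reflL_succ' (g : ℕ → V) (m : ℕ) (ξ : V) :
    reflL B g (m + 1) ξ = sRefl B (g 0) (reflL B (fun t => g (t + 1)) m ξ) := by
  induction m generalizing ξ g with
  | zero => rfl
  | succ m ih =>
      show reflL B g (m + 1) (sRefl B (g (m + 1)) ξ) = _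
      rw [ih]
      rfl

lemma reflL_add (g : ℕ → V) (p q : ℕ) (ξ : V) :
    reflL B g (p + q) ξ = reflL B g p (reflL B (fun t => g (t + p)) q ξ) := by
  induction q generalizing ξ with
  | zero => rfl
  | succ q ih =>
      have e : g (p + q) = g (q + p) := by rw [Nat.add_comm]
      calc reflL B g (p + q + 1) ξ = reflL B g (p + q) (sRefl B (g (p + q)) ξ) := rfl
        _ = reflL B g p (reflL B (fun t => g (t + p)) q (sRefl B (g (p + q)) ξ)) := ih _
        _ = reflL B g p (reflL B (fun t => g (t + p)) q (sRefl B (g (q + p)) ξ)) := by rw [e]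
        _ = reflL B g p (reflL B (fun t => g (t + p)) (q + 1) ξ) := rfl

lemma B_reflL (hB : ∀ x y, B x y = B y x) (g : ℕ → V) (m : ℕ) (x y : V) :
    B (reflL B g m x) (reflL B g m y) = B x y := by
  induction m generalizing x y with
  | zero => rfl
  | succ m ih =>
      show B (reflL B g m (sRefl B (g m) x)) (reflL B g m (sRefl B (g m) y)) = _
      rw [ih, B_sRefl_sRefl B hB]

/-- `GamN B g k = s_{g 0} ⋯ s_{g (k-1)} (g k)`. -/
def GamN (g : ℕ → V) (k : ℕ) : V := reflL B g k (g k)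

lemma lemA (hB : ∀ x y, B x y = B y x) (g : ℕ → V) (k : ℕ) :
    GamN B g k = g k + ∑ j ∈ Finset.range k,
      cartan B (GamN B g j) (GamN B g k) • g j := by
  induction k generalizing g with
  | zero => simp [GamN, reflL]
  | succ k ih =>
      set h : ℕ → V := fun t => g (t + 1) with hh
      have eG : ∀ j, GamN B g (j + 1) = sRefl B (g 0) (GamN B h j) := by
        intro j
        unfold GamN
        rw [reflL_succ']
      have ecar : ∀ j, cartan B (GamN B g (j + 1)) (GamN B g (k + 1)) =
          cartan B (GamN B h j) (GamN B h k) := by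
        intro j
        rw [eG j, eG k]
        unfold cartan
        rw [B_sRefl_sRefl B hB, B_sRefl_sRefl B hB]
      have ecar0 : cartan B (GamN B g 0) (GamN B g (k + 1)) =
          -(cartan B (g 0) (GamN B h k)) := by
        rw [eG k]
        show cartan B (g 0) _ = _
        rw [cartan_self_sRefl]
      have expand : GamN B h k = h k + ∑ j ∈ Finset.range k,
          cartan B (GamN B h j) (GamN B h k) • h j := ih h
      rw [Finset.sum_range_succ']
      simp only [ecar, ecar0]
      rw [eG k, sRefl]
      nth_rewrite 1 [expand]
      simp only [hh, neg_smul]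
      abel

lemma lemB (hB : ∀ x y, B x y = B y x) (g : ℕ → V) (i k : ℕ) (hik : i < k)
    (hbb : B (g i) (g i) ≠ 0) :
    B (GamN B g i) (GamN B g k) = -(B (g i) (g k)) - ∑ j ∈ Finset.Ico (i + 1) k,
      cartan B (GamN B g j) (GamN B g k) * B (g i) (g j) := by
  obtain ⟨m, rfl⟩ : ∃ m, k = i + 1 + m := ⟨k - i - 1, by omega⟩
  set g2 : ℕ → V := fun t => g (t + (i + 1)) with hg2
  have key : ∀ j, GamN B g (i + 1 + j) = reflL B g (i + 1) (GamN B g2 j) := by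
    intro j
    unfold GamN
    rw [reflL_add B g (i + 1) j]
    have : g (i + 1 + j) = g2 j := by rw [hg2]; simp; congr 1; omega
    rw [this]
  have hdecomp : GamN B g (i + 1 + m) = reflL B g i (sRefl B (g i) (GamN B g2 m)) := by
    rw [key m]
    rfl
  have hGi : GamN B g i = reflL B g i (g i) := rfl
  have step1 : B (GamN B g i) (GamN B g (i + 1 + m)) = -(B (g i) (GamN B g2 m)) := by
    rw [hdecomp, hGi, B_reflL B hB, B_self_sRefl B _ _ hbb]
  have ecar : ∀ j, cartan B (GamN B g2 j) (GamN B g2 m) =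
      cartan B (GamN B g (i + 1 + j)) (GamN B g (i + 1 + m)) := by
    intro j
    rw [key j, key m]
    unfold cartan
    rw [B_reflL B hB, B_reflL B hB]
  have expand := lemA B hB g2 m
  rw [step1, expand]
  simp only [map_add, map_sum, _root_.map_smul, smul_eq_mul]
  have hg2m : g2 m = g (i + 1 + m) := by rw [hg2]; simp; congr 1; omega
  rw [hg2m]
  rw [Finset.sum_Ico_eq_sum_range]
  have hmm : i + 1 + m - (i + 1) = m := by omega
  rw [hmm, neg_add, sub_eq_add_neg]
  congr 2
  apply Finset.sum_congr rfl
  intro j hj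
  rw [ecar j]
  have : g2 j = g (i + 1 + j) := by rw [hg2]; simp; congr 1; omega
  rw [this]

end Helpers

section FinLevel
variable {n : ℕ} {V : Type*} [AddCommGroup V] [Module ℂ V]
variable (B : V →ₗ[ℂ] V →ₗ[ℂ] ℂ) (β : Fin n → V)

omit [Module ℂ V] in
lemma gext_val (j : Fin n) : gext β j.val = β j := by
  simp [gext, j.isLt]

lemma gam_eq_GamN (j : Fin n) : gam B β j = GamN B (gext β) j.val := by
  unfold gam GamN
  rw [gext_val]

lemma GamN_eq_gam (t : ℕ) (h : t < n) : GamN B (gext β) t = gam B β ⟨t, h⟩ := by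
  rw [gam_eq_GamN]

lemma finA (hB : ∀ x y, B x y = B y x) (k : Fin n) :
    gam B β k = ∑ j, Qmat B (gam B β) j k • β j := by
  set F : ℕ → V := fun t =>
    if h : t < n then Qmat B (gam B β) ⟨t, h⟩ k • β ⟨t, h⟩ else 0 with hF
  have hFj : ∀ j : Fin n, Qmat B (gam B β) j k • β j = F j.val := by
    intro j
    simp [hF, j.isLt]
  have e1 : F k.val = β k := by
    simp [hF, k.isLt, Qmat]
  have e2 : ∀ t ∈ Finset.range k.val, F t =
      cartan B (GamN B (gext β) t) (GamN B (gext β) k.val) • gext β t := by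
    intro t ht
    simp only [Finset.mem_range] at ht
    have htn : t < n := lt_trans ht k.isLt
    have hlt : (⟨t, htn⟩ : Fin n) < k := by
      rw [Fin.lt_def]; exact ht
    have hne : (⟨t, htn⟩ : Fin n) ≠ k := ne_of_lt hlt
    simp only [hF, dif_pos htn, Qmat, Matrix.of_apply, if_neg hne, if_pos hlt]
    rw [GamN_eq_gam B β t htn, GamN_eq_gam B β k.val k.isLt]
    simp only [Fin.eta]
    rw [gext_val β ⟨t, htn⟩]
  calc gam B β k = ∑ t ∈ Finset.range k.val, F t + F k.val := by
        rw [e1, Finset.sum_congr rfl e2]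
        have := lemA B hB (gext β) k.val
        rw [GamN_eq_gam B β k.val k.isLt] at this
        simp only [Fin.eta] at this
        rw [this, gext_val β k, add_comm]
        apply congrArg (· + β k)
        apply Finset.sum_congr rfl
        intro t ht
        simp [GamN_eq_gam B β k.val k.isLt]
    _ = ∑ t ∈ Finset.range (k.val + 1), F t := (Finset.sum_range_succ F k.val).symm
    _ = ∑ t ∈ Finset.range n, F t := by
        rw [Finset.range_eq_Ico, Finset.range_eq_Ico]
        rw [← Finset.sum_Ico_consecutive F (Nat.zero_le (k.val + 1)) k.isLt]
        have hz : ∑ t ∈ Finset.Ico (k.val + 1) n, F t = 0 := by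
          apply Finset.sum_eq_zero
          intro t ht
          simp only [Finset.mem_Ico] at ht
          have hgt : k < (⟨t, ht.2⟩ : Fin n) := by
            rw [Fin.lt_def]; exact ht.1
          have hne : (⟨t, ht.2⟩ : Fin n) ≠ k := ne_of_gt hgt
          have hnlt : ¬ (⟨t, ht.2⟩ : Fin n) < k := not_lt_of_gt hgt
          simp [hF, ht.2, Qmat, hne, hnlt]
        rw [hz, add_zero, ← Finset.range_eq_Ico]
    _ = ∑ j, Qmat B (gam B β) j k • β j := by
        rw [← Fin.sum_univ_eq_sum_range F n]
        exact Finset.sum_congr rfl fun j _ => (hFj j).symm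

end FinLevel

section FinLevel2
variable {n : ℕ} {V : Type*} [AddCommGroup V] [Module ℂ V]
variable (B : V →ₗ[ℂ] V →ₗ[ℂ] ℂ) (β : Fin n → V)

lemma mk_lt_iff {t : ℕ} (h : t < n) {k : Fin n} : ((⟨t, h⟩ : Fin n) < k) ↔ t < k.val :=
  Iff.rfl

lemma lt_mk_iff {t : ℕ} (h : t < n) {k : Fin n} : (k < (⟨t, h⟩ : Fin n)) ↔ k.val < t :=
  Iff.rfl

lemma mk_eq_iff {t : ℕ} (h : t < n) {k : Fin n} : ((⟨t, h⟩ : Fin n) = k) ↔ t = k.val :=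
  Fin.ext_iff

lemma gam_norm (hB : ∀ x y, B x y = B y x) (j : Fin n) :
    B (gam B β j) (gam B β j) = B (β j) (β j) := by
  rw [gam_eq_GamN]
  unfold GamN
  rw [B_reflL B hB, gext_val]

lemma finB (hB : ∀ x y, B x y = B y x) (hβ : ∀ j, B (β j) (β j) ≠ 0) :
    Qmat B β * Qmat B (gam B β) = 1 := by
  ext i k
  rw [Matrix.mul_apply]
  rcases lt_trichotomy i k with h | h | h
  · -- main case i < k
    rw [Matrix.one_apply_ne (ne_of_lt h)]
    have hik : i.val < k.val := h
    set F : ℕ → ℂ := fun t =>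
      if ht : t < n then Qmat B β i ⟨t, ht⟩ * Qmat B (gam B β) ⟨t, ht⟩ k else 0 with hF
    have h1 : ∑ j, Qmat B β i j * Qmat B (gam B β) j k = ∑ t ∈ Finset.range n, F t := by
      rw [← Fin.sum_univ_eq_sum_range F n]
      apply Finset.sum_congr rfl
      intro j _
      simp [hF, j.isLt]
    have h2 : ∑ t ∈ Finset.range n, F t = ∑ t ∈ Finset.Ico i.val (k.val + 1), F t := by
      symm
      apply Finset.sum_subset
      · intro t ht
        simp only [Finset.mem_Ico, Finset.mem_range] at *
        omega
      · intro t ht1 ht2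
        simp only [Finset.mem_range] at ht1
        simp only [Finset.mem_Ico, not_and, not_lt] at ht2
        simp only [hF, dif_pos ht1]
        rcases lt_or_ge t i.val with hc | hc
        · have h5 : ¬ (i < (⟨t, ht1⟩ : Fin n)) := by rw [lt_mk_iff]; omega
          have hne : ¬ (i = (⟨t, ht1⟩ : Fin n)) := by
            intro hc2; rw [eq_comm, mk_eq_iff] at hc2; omega
          simp [Qmat, h5, hne]
        · have htk : k.val + 1 ≤ t := ht2 hc
          have h5 : ¬ ((⟨t, ht1⟩ : Fin n) < k) := by rw [mk_lt_iff]; omega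
          have hne : ¬ ((⟨t, ht1⟩ : Fin n) = k) := by
            intro hc2; rw [mk_eq_iff] at hc2; omega
          simp [Qmat, h5, hne]
    have h3 : ∑ t ∈ Finset.Ico i.val (k.val + 1), F t =
        F i.val + (∑ t ∈ Finset.Ico (i.val + 1) k.val, F t + F k.val) := by
      rw [Finset.sum_eq_sum_Ico_succ_bot (by omega) F, Finset.sum_Ico_succ_top (by omega) F]
    have hFi : F i.val = cartan B (gam B β i) (gam B β k) := by
      have hlt : i < k := h
      simp [hF, i.isLt, Qmat, Fin.eta, ne_of_lt hlt, hlt]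
    have hFk : F k.val = cartan B (β i) (β k) := by
      simp [hF, k.isLt, Qmat, Fin.eta, ne_of_lt h, h]
    rw [h1, h2, h3, hFi, hFk]
    -- use lemB
    have hbb : B (gext β i.val) (gext β i.val) ≠ 0 := by rw [gext_val]; exact hβ i
    have hB2 := lemB B hB (gext β) i.val k.val hik hbb
    rw [gext_val β i, gext_val β k, GamN_eq_gam B β i.val i.isLt,
      GamN_eq_gam B β k.val k.isLt] at hB2
    simp only [Fin.eta] at hB2
    have hlam : B (gam B β i) (gam B β i) = B (β i) (β i) := gam_norm B β hB i
    have hcar : cartan B (gam B β i) (gam B β k) =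
        2 * B (gam B β i) (gam B β k) / B (β i) (β i) := by
      rw [cartan, hlam]
    have hmid : ∀ t ∈ Finset.Ico (i.val + 1) k.val, F t =
        2 * (cartan B (GamN B (gext β) t) (gam B β k) * B (β i) (gext β t)) /
          B (β i) (β i) := by
      intro t ht
      simp only [Finset.mem_Ico] at ht
      have htn : t < n := lt_trans ht.2 k.isLt
      have hilt : i < (⟨t, htn⟩ : Fin n) := by rw [lt_mk_iff]; omega
      have hltk : (⟨t, htn⟩ : Fin n) < k := by rw [mk_lt_iff]; exact ht.2
      have hne1 : ¬ (i = (⟨t, htn⟩ : Fin n)) := ne_of_lt hilt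
      have hne2 : ¬ ((⟨t, htn⟩ : Fin n) = k) := ne_of_lt hltk
      simp only [hF, dif_pos htn, Qmat, Matrix.of_apply, if_neg hne1, if_pos hilt,
        if_neg hne2, if_pos hltk]
      rw [GamN_eq_gam B β t htn]
      simp only [gext, dif_pos htn]
      rw [cartan]
      ring
    rw [Finset.sum_congr rfl hmid, hcar, hB2]
    rw [← Finset.sum_div, ← Finset.mul_sum, cartan]
    have hne := hβ i
    field_simp
    ring
  · -- diagonal
    subst h
    rw [Matrix.one_apply_eq]
    rw [Finset.sum_eq_single i]
    · simp [Qmat]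
    · intro j _ hji
      rcases lt_or_gt_of_ne hji with hc | hc
      · have hz : Qmat B β i j = 0 := by
          simp [Qmat, not_lt_of_gt hc, hc.ne']
        rw [hz, zero_mul]
      · have hz : Qmat B (gam B β) j i = 0 := by
          simp [Qmat, not_lt_of_gt hc, hc.ne']
        rw [hz, mul_zero]
    · simp
  · -- below diagonal
    rw [Matrix.one_apply_ne (ne_of_gt h)]
    apply Finset.sum_eq_zero
    intro j _
    rcases lt_or_ge j i with hc | hc
    · have hz : Qmat B β i j = 0 := by
        simp [Qmat, not_lt_of_gt hc, hc.ne']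
      rw [hz, zero_mul]
    · have hkj : k < j := lt_of_lt_of_le h hc
      have hz : Qmat B (gam B β) j k = 0 := by
        simp [Qmat, not_lt_of_gt hkj, hkj.ne']
      rw [hz, mul_zero]

end FinLevel2

section FinLevel3
variable {n : ℕ} {V : Type*} [AddCommGroup V] [Module ℂ V]
variable (B : V →ₗ[ℂ] V →ₗ[ℂ] ℂ) (β : Fin n → V)

lemma lem3 (hB : ∀ x y, B x y = B y x) (hβ : ∀ j, B (β j) (β j) ≠ 0)
    (w : Fin n → ℂ) (j : Fin n) :
    B (bmap β w) (β j) - (lam B β).mulVec w j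
      = B (β j) (β j) * ((Qmat B β).mulVec w j) := by
  simp only [bmap, map_sum, LinearMap.sum_apply, _root_.map_smul, LinearMap.smul_apply,
    smul_eq_mul, Matrix.mulVec, dotProduct]
  rw [← Finset.sum_sub_distrib, Finset.mul_sum]
  apply Finset.sum_congr rfl
  intro k _
  rcases lt_trichotomy k j with hc | hc | hc
  · simp only [lam, Qmat, Matrix.of_apply]
    rw [if_neg (not_lt_of_gt hc), if_pos hc, if_neg hc.ne', if_neg (not_lt_of_gt hc)]
    rw [hB (β k) (β j)]
    ring
  · subst hc
    have h1 : lam B β k k = 0 := by simp [lam]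
    have h2 : Qmat B β k k = 1 := by simp [Qmat]
    rw [h1, h2]
    ring
  · simp only [lam, Qmat, Matrix.of_apply]
    rw [if_pos hc, if_neg hc.ne, if_pos hc]
    rw [hB (β k) (β j), cartan]
    have hc2 : B (β j) (β j) * (2 * B (β j) (β k) / B (β j) (β j) * w k)
        = 2 * B (β j) (β k) * w k := by
      field_simp
      rw [mul_assoc, mul_div_cancel_left₀ _ (hβ j)]
    rw [hc2]
    ring

lemma bmapQ (hB : ∀ x y, B x y = B y x) (v : Fin n → ℂ) :
    bmap β ((Qmat B (gam B β)).mulVec v) = ∑ j, v j • gam B β j := by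
  simp only [bmap, Matrix.mulVec, dotProduct]
  calc ∑ j, (∑ k, Qmat B (gam B β) j k * v k) • β j
      = ∑ j, ∑ k, (Qmat B (gam B β) j k * v k) • β j := by
        apply Finset.sum_congr rfl
        intro j _
        rw [Finset.sum_smul]
    _ = ∑ k, ∑ j, (Qmat B (gam B β) j k * v k) • β j := Finset.sum_comm
    _ = ∑ k, v k • gam B β k := by
        apply Finset.sum_congr rfl
        intro k _
        rw [finA B β hB k, Finset.smul_sum]
        apply Finset.sum_congr rfl
        intro j _
        rw [smul_smul, mul_comm]

end FinLevel3

theorem stmt11 (n : ℕ) (hn : 0 < n) {V : Type*} [AddCommGroup V] [Module ℂ V]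
    (B : V →ₗ[ℂ] V →ₗ[ℂ] ℂ) (hBsymm : ∀ x y, B x y = B y x)
    (β : Fin n → V) (hβ : ∀ j, B (β j) (β j) ≠ 0)
    (a : Fin n → ℂ) (ξ : V) :
    ((∃ w : Fin n → ℂ, (lam B β).mulVec w = a ∧ bmap β w = ξ) ↔
      ξ = ∑ j, ((B (β j) (β j))⁻¹ * (B ξ (β j) - a j)) • gam B β j) ∧
    (∀ w : Fin n → ℂ, (lam B β).mulVec w = a → bmap β w = ξ →
      w = (Qmat B (gam B β)).mulVec
        (fun j => (B (β j) (β j))⁻¹ * (B ξ (β j) - a j))) := by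
  have hRQ : Qmat B β * Qmat B (gam B β) = 1 := finB B β hBsymm hβ
  have hQR : Qmat B (gam B β) * Qmat B β = 1 := mul_eq_one_comm.mp hRQ
  set c : Fin n → ℂ := fun j => (B (β j) (β j))⁻¹ * (B ξ (β j) - a j) with hc
  -- uniqueness part
  have huniq : ∀ w : Fin n → ℂ, (lam B β).mulVec w = a → bmap β w = ξ →
      w = (Qmat B (gam B β)).mulVec c := by
    intro w ha hb
    have hRw : (Qmat B β).mulVec w = c := by
      funext j
      have h3 := lem3 B β hBsymm hβ w j
      rw [hb, ha] at h3
      show (Qmat B β).mulVec w j = (B (β j) (β j))⁻¹ * (B ξ (β j) - a j)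
      rw [h3, inv_mul_cancel_left₀ (hβ j)]
    calc w = (1 : Matrix (Fin n) (Fin n) ℂ).mulVec w := by rw [Matrix.one_mulVec]
      _ = (Qmat B (gam B β) * Qmat B β).mulVec w := by rw [hQR]
      _ = (Qmat B (gam B β)).mulVec ((Qmat B β).mulVec w) :=
          (Matrix.mulVec_mulVec w _ _).symm
      _ = (Qmat B (gam B β)).mulVec c := by rw [hRw]
  constructor
  · constructor
    · rintro ⟨w, ha, hb⟩
      have key : bmap β ((Qmat B (gam B β)).mulVec c) = ξ := by
        rw [← huniq w ha hb]; exact hb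
      have key2 : ξ = ∑ j, c j • gam B β j := by
        rw [← key, bmapQ B β hBsymm]
      exact key2
    · intro hξ
      refine ⟨(Qmat B (gam B β)).mulVec c, ?_, ?_⟩
      · funext j
        have h3 := lem3 B β hBsymm hβ ((Qmat B (gam B β)).mulVec c) j
        have hbm : bmap β ((Qmat B (gam B β)).mulVec c) = ξ := by
          rw [bmapQ B β hBsymm, ← hξ]
        have hRc : (Qmat B β).mulVec ((Qmat B (gam B β)).mulVec c) = c := by
          rw [Matrix.mulVec_mulVec, hRQ, Matrix.one_mulVec]
        rw [hbm, hRc] at h3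
        have hcj : c j = (B (β j) (β j))⁻¹ * (B ξ (β j) - a j) := rfl
        rw [hcj, mul_inv_cancel_left₀ (hβ j), sub_right_inj] at h3
        exact h3
      · rw [bmapQ B β hBsymm, ← hξ]
  · exact huniq
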